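/- Let G₁,…,G_k be abelian groups and ω a strictly positive submultiplicative function on G = G₁ × ⋯ × G_k. Suppose there is r > 0 such that ω(T_i) ≤ r·ω(t₁,…,t_k) for all i and all (t₁,…,t_k) ∈ G, where T_i has t_i in the i-th coordinate and identities elsewhere. If for each i there is no nontrivial homomorphism φ : G_i → ℂ with sup_{t∈G_i} |φ(t)|/(ω_i(t)ω_i(t⁻¹)) < ∞ (where ω_i(t) = ω of the element with t in coordinate i and identities elsewhere), then there is no nontrivial homomorphism Φ : G → ℂ with sup_{g∈G} |Φ(g)|/(ω(g)ω(g⁻¹)) < ∞. -/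

import Mathlib

/-- under the domination condition ω(T_i) ≤ r ω(t₁,…,t_k), if no factor
admits a nontrivial bounded homomorphism into ℂ, then neither does the product. -/
theorem stmt18 {k : ℕ} (G : Fin k → Type*) [∀ i, CommGroup (G i)]
    (ω : (∀ i, G i) → ℝ) (hpos : ∀ g, 0 < ω g)
    (hsub : ∀ g h, ω (g * h) ≤ ω g * ω h)
    (r : ℝ) (hr : 0 < r)
    (hdom : ∀ (i : Fin k) (g : ∀ i, G i), ω (Pi.mulSingle i (g i)) ≤ r * ω g)
    (hfac : ∀ i : Fin k, ¬ ∃ φ : G i → ℂ,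
      (∀ s t, φ (s * t) = φ s + φ t) ∧ (∃ t, φ t ≠ 0) ∧
      ∃ C : ℝ, ∀ t, ‖φ t‖ /
        (ω (Pi.mulSingle i t) * ω (Pi.mulSingle i t⁻¹)) ≤ C) :
    ¬ ∃ Φ : (∀ i, G i) → ℂ,
      (∀ g h, Φ (g * h) = Φ g + Φ h) ∧ (∃ g, Φ g ≠ 0) ∧
      ∃ C : ℝ, ∀ g, ‖Φ g‖ / (ω g * ω g⁻¹) ≤ C := by
  rintro ⟨Φ, hadd, ⟨g₀, hg₀⟩, C, hC⟩
  have hΦ1 : Φ 1 = 0 := by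
    have h := hadd 1 1
    rw [one_mul] at h
    exact (left_eq_add.mp h)
  -- each restriction vanishes
  have hzero : ∀ (i : Fin k) (t : G i), Φ (Pi.mulSingle i t) = 0 := by
    intro i t
    by_contra ht
    exact hfac i ⟨fun t => Φ (Pi.mulSingle i t),
      fun s t => by rw [← hadd, ← Pi.mulSingle_mul],
      ⟨t, ht⟩,
      C, fun t => by simpa [Pi.mulSingle_inv] using hC (Pi.mulSingle i t)⟩
  -- Φ of a product over a finset is the sum
  have hprod : ∀ (s : Finset (Fin k)) (f : Fin k → (∀ i, G i)),
      Φ (∏ i ∈ s, f i) = ∑ i ∈ s, Φ (f i) := by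
    intro s f
    induction s using Finset.cons_induction with
    | empty => simpa using hΦ1
    | cons a s ha ih => rw [Finset.prod_cons, Finset.sum_cons, hadd, ih]
  have : Φ g₀ = 0 := by
    have hg : g₀ = ∏ i, Pi.mulSingle i (g₀ i) := by
      funext j
      simp [Finset.prod_apply, Pi.mulSingle_apply, Finset.prod_ite_eq']
    rw [hg, hprod]
    simp [hzero]
  exact hg₀ this
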